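/- Let G be a finitely generated group and {X_n} an exhaustive sequence containing an amenable subsequence. If a cellular automaton A over G is Besicovitch injective with respect to {X_n} (i.e., d_B(c_1,c_2) > 0 implies d_B(F_A(c_1), F_A(c_2)) > 0), then A is preinjective, i.e., A has no pair of mutually erasable patterns. -/

import Mathlib

open Filter Pointwise

noncomputable def hamDist {G Q : Type*} (U : Set G) (c₁ c₂ : G → Q) : ℕ :=
  {x ∈ U | c₁ x ≠ c₂ x}.ncard

noncomputable def besDist {G Q : Type*} (X : ℕ → Finset G) (c₁ c₂ : G → Q) : ℝ :=
  limsup (fun n => (hamDist (X n : Set G) c₁ c₂ : ℝ) / (X n).card) atTop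

def IsExhaustive {G : Type*} (X : ℕ → Finset G) : Prop :=
  (∀ n, X n ⊆ X (n + 1)) ∧ ∀ g : G, ∃ n, g ∈ X n

def IsFolner {G : Type*} [Group G] [DecidableEq G] (X : ℕ → Finset G) : Prop :=
  IsExhaustive X ∧ ∀ E : Finset G,
    Tendsto (fun n => (((X n * E⁻¹) \ X n).card : ℝ) / (X n).card) atTop (nhds 0)

def caMap {G Q : Type*} [Group G] (N : Finset G) (f : (N → Q) → Q) :
    (G → Q) → G → Q :=
  fun c g => f (fun x => c (g * x.1))

/-- Two patterns `p₁, p₂` with support `E` are mutually erasable for the CA. -/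
def MutuallyErasable {G Q : Type*} [Group G] (N : Finset G) (f : (N → Q) → Q)
    (E : Finset G) (p₁ p₂ : G → Q) : Prop :=
  ∀ c₁ c₂ : G → Q, Set.EqOn c₁ p₁ E → Set.EqOn c₂ p₂ E →
    Set.EqOn c₁ c₂ ((E : Set G)ᶜ) → caMap N f c₁ = caMap N f c₂

/-! ### Auxiliary machinery -/

section Aux
variable {G Q : Type*} [Group G]

open Classical in
/-- The configuration obtained by tiling the translates `t • E`, `t ∈ T`, with the
pattern `p₂` for `t ∈ A` and `p₁` otherwise (and `p₁` off the tiles). -/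
noncomputable def tileCfg (E : Finset G) (p₁ p₂ : G → Q) (T A : Set G) : G → Q :=
  fun g => if h : ∃ t, t ∈ T ∧ g ∈ t • (E : Set G) then
    (if Classical.choose h ∈ A then p₂ else p₁) ((Classical.choose h)⁻¹ * g)
  else p₁ g

variable {E : Finset G} {T : Set G}

/-- The translates `t • E`, `t ∈ T`, are pairwise disjoint. -/
def PDisj (E : Finset G) (T : Set G) : Prop :=
  T.Pairwise fun s t => Disjoint (s • (E : Set G)) (t • (E : Set G))

lemma PDisj.unique (hd : PDisj E T) {t t' g : G} (ht : t ∈ T) (ht' : t' ∈ T)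
    (hg : g ∈ t • (E : Set G)) (hg' : g ∈ t' • (E : Set G)) : t = t' := by
  by_contra hne
  exact Set.disjoint_left.mp (hd ht ht' hne) hg hg'

open Classical in
lemma tileCfg_eq_of_mem (hd : PDisj E T) {p₁ p₂ : G → Q} {t g : G} (ht : t ∈ T)
    (hg : g ∈ t • (E : Set G)) (A : Set G) :
    tileCfg E p₁ p₂ T A g = (if t ∈ A then p₂ else p₁) (t⁻¹ * g) := by
  have h : ∃ t, t ∈ T ∧ g ∈ t • (E : Set G) := ⟨t, ht, hg⟩
  have hch := Classical.choose_spec h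
  have heq : Classical.choose h = t := hd.unique hch.1 ht hch.2 hg
  rw [tileCfg, dif_pos h, heq]

lemma tileCfg_eq_of_not_mem {p₁ p₂ : G → Q}
    {g : G} (h : ¬ ∃ t, t ∈ T ∧ g ∈ t • (E : Set G)) (A : Set G) :
    tileCfg E p₁ p₂ T A g = p₁ g := by
  rw [tileCfg, dif_neg h]

lemma caMap_translate (N : Finset G) (f : (N → Q) → Q) (c : G → Q) (a : G) :
    caMap N f (fun g => c (a * g)) = fun g => caMap N f c (a * g) := by
  funext g; simp [caMap, mul_assoc]

end Aux

section Aux2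
variable {G Q : Type*} [Group G] {N E : Finset G} {f : (N → Q) → Q}
  {p₁ p₂ : G → Q} {T : Set G}

lemma caMap_tile_swap (hd : PDisj E T) (hME : MutuallyErasable N f E p₁ p₂)
    {a : G} (ha : a ∈ T) {A : Set G} (haA : a ∉ A) :
    caMap N f (tileCfg E p₁ p₂ T A) = caMap N f (tileCfg E p₁ p₂ T (insert a A)) := by
  set c₁ : G → Q := fun g => tileCfg E p₁ p₂ T A (a * g) with hc₁
  set c₂ : G → Q := fun g => tileCfg E p₁ p₂ T (insert a A) (a * g) with hc₂
  have h1 : Set.EqOn c₁ p₁ (E : Set G) := by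
    intro x hx
    have hax : a * x ∈ a • (E : Set G) := Set.smul_mem_smul_set hx
    simp only [hc₁, tileCfg_eq_of_mem hd ha hax, if_neg haA, inv_mul_cancel_left]
  have h2 : Set.EqOn c₂ p₂ (E : Set G) := by
    intro x hx
    have hax : a * x ∈ a • (E : Set G) := Set.smul_mem_smul_set hx
    simp only [hc₂, tileCfg_eq_of_mem hd ha hax, if_pos (Set.mem_insert a A),
      inv_mul_cancel_left]
  have h3 : Set.EqOn c₁ c₂ ((E : Set G)ᶜ) := by
    intro x hx
    by_cases h : ∃ t, t ∈ T ∧ a * x ∈ t • (E : Set G)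
    · obtain ⟨t, ht, hgt⟩ := h
      have hta : t ≠ a := by
        rintro rfl
        exact hx (Set.smul_mem_smul_set_iff.mp hgt)
      simp only [hc₁, hc₂, tileCfg_eq_of_mem hd ht hgt]
      by_cases htA : t ∈ A <;> simp [htA, hta, Set.mem_insert_iff]
    · simp only [hc₁, hc₂, tileCfg_eq_of_not_mem h]
  have := hME c₁ c₂ h1 h2 h3
  rw [hc₁, hc₂, caMap_translate, caMap_translate] at this
  funext g
  have := congrFun this (a⁻¹ * g)
  simpa using this

lemma caMap_tile_finset (hd : PDisj E T) (hME : MutuallyErasable N f E p₁ p₂)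
    (S : Finset G) (hS : (S : Set G) ⊆ T) :
    caMap N f (tileCfg E p₁ p₂ T ∅) = caMap N f (tileCfg E p₁ p₂ T S) := by
  classical
  induction S using Finset.induction_on with
  | empty => simp
  | @insert a S ha ih =>
    have hsub : (S : Set G) ⊆ T := by
      intro x hx; exact hS (by simp [hx])
    have haT : a ∈ T := hS (by simp)
    rw [ih hsub, Finset.coe_insert]
    exact caMap_tile_swap hd hME haT (by simpa using ha)

end Aux2

section Aux3
variable {G Q : Type*} [Group G] [DecidableEq G] {N E : Finset G}
  {f : (N → Q) → Q} {p₁ p₂ : G → Q} {T : Set G}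

lemma caMap_tile_univ (hd : PDisj E T) (hME : MutuallyErasable N f E p₁ p₂) :
    caMap N f (tileCfg E p₁ p₂ T ∅) = caMap N f (tileCfg E p₁ p₂ T Set.univ) := by
  classical
  funext g
  set S : Finset G := ((g • N) * E⁻¹).filter (· ∈ T) with hSdef
  have hS : (S : Set G) ⊆ T := by
    intro t ht
    simp only [hSdef, Finset.coe_filter, Set.mem_setOf_eq] at ht
    exact ht.2
  rw [congrFun (caMap_tile_finset hd hME S hS) g]
  show f _ = f _
  congr 1
  funext x
  by_cases h : ∃ t, t ∈ T ∧ g * x.1 ∈ t • (E : Set G)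
  · obtain ⟨t, ht, hgt⟩ := h
    have htS : t ∈ S := by
      obtain ⟨e, he, hte⟩ := hgt
      have : t = (g * x.1) * e⁻¹ := by
        simp only [smul_eq_mul] at hte
        rw [← hte]; group
      rw [hSdef, Finset.mem_filter]
      refine ⟨?_, ht⟩
      rw [this]
      exact Finset.mul_mem_mul (Finset.smul_mem_smul_finset x.2) (Finset.inv_mem_inv he)
    rw [tileCfg_eq_of_mem hd ht hgt, tileCfg_eq_of_mem hd ht hgt,
      if_pos (Finset.mem_coe.mpr htS), if_pos (Set.mem_univ t)]
  · rw [tileCfg_eq_of_not_mem h, tileCfg_eq_of_not_mem h]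

omit [DecidableEq G] in
lemma exists_maximal_pdisj (E : Finset G) :
    ∃ T : Set G, Maximal (PDisj E) T := by
  apply zorn_subset
  intro c hc hchain
  refine ⟨⋃₀ c, ?_, fun s hs => Set.subset_sUnion_of_mem hs⟩
  intro x hx y hy hxy
  obtain ⟨A, hA, hxA⟩ := hx
  obtain ⟨B, hB, hyB⟩ := hy
  rcases hchain.total hA hB with h | h
  · exact (hc hB) (h hxA) hyB hxy
  · exact (hc hA) hxA (h hyB) hxy

lemma maximal_pdisj_cover {T : Set G} (hmax : Maximal (PDisj E) T)
    (hE : E.Nonempty) (g : G) : ∃ t ∈ T, g ∈ t • ((E * E⁻¹ : Finset G) : Set G) := by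
  have key : ∃ t ∈ T, ¬ Disjoint (g • (E : Set G)) (t • (E : Set G)) := by
    by_contra hcon
    push_neg at hcon
    have hins : PDisj E (insert g T) := by
      rw [PDisj, Set.pairwise_insert]
      exact ⟨hmax.1, fun t ht _ => ⟨hcon t ht, (hcon t ht).symm⟩⟩
    have hgT : g ∈ T := hmax.2 hins (Set.subset_insert g T) (Set.mem_insert g T)
    obtain ⟨e, he⟩ := hE
    have hmem : g * e ∈ g • (E : Set G) := Set.smul_mem_smul_set (by exact_mod_cast he)
    exact Set.disjoint_left.mp (hcon g hgT) hmem hmem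
  obtain ⟨t, ht, hnd⟩ := key
  obtain ⟨x, hx1, hx2⟩ := Set.not_disjoint_iff.mp hnd
  obtain ⟨e₁, he₁, hxe₁⟩ := hx1
  obtain ⟨e₂, he₂, hxe₂⟩ := hx2
  refine ⟨t, ht, e₂ * e₁⁻¹, ?_, ?_⟩
  · exact_mod_cast Finset.mul_mem_mul he₂ (Finset.inv_mem_inv (by exact_mod_cast he₁))
  · have h1 : g * e₁ = x := hxe₁
    have h2 : t * e₂ = x := hxe₂
    show t * (e₂ * e₁⁻¹) = g
    calc t * (e₂ * e₁⁻¹) = (t * e₂) * e₁⁻¹ := by group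
    _ = (g * e₁) * e₁⁻¹ := by rw [h2, h1]
    _ = g := by group

end Aux3

lemma density_bound {G Q : Type*} [Group G] [DecidableEq G]
    (K : Finset G) (hKne : K.Nonempty) (T : Set G) (g₀ : G)
    (hcover : ∀ g, ∃ t ∈ T, g ∈ t • (K : Set G))
    (c₁ c₂ : G → Q) (hdiff : ∀ t ∈ T, c₁ (t * g₀) ≠ c₂ (t * g₀))
    (Y : Finset G) :
    (Y.card : ℝ) / K.card - ((((Y * ({g₀⁻¹} * K⁻¹)) \ Y).card : ℝ)
      + ((Y * {g₀⁻¹}) \ Y).card) ≤ (hamDist (Y : Set G) c₁ c₂ : ℝ) := by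
  classical
  set F : Finset G := {g₀⁻¹} * K⁻¹ with hF
  set Yg : Finset G := Y * {g₀⁻¹} with hYg
  set Tn : Finset G := (Y * F).filter (· ∈ T) with hTn
  set T₀ : Finset G := Tn.filter (fun t => t * g₀ ∈ Y) with hT₀
  have hYgcard : Yg.card = Y.card := Finset.card_mul_singleton Y g₀⁻¹
  -- covering bound
  have hcov : Yg ⊆ Tn.biUnion (fun t => t • K) := by
    intro y hy
    obtain ⟨t, ht, k, hk, htk⟩ := hcover y
    have hkK : k ∈ K := hk
    have hty : t = y * k⁻¹ := by
      simp only [smul_eq_mul] at htk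
      rw [← htk]; group
    have htmem : t ∈ Tn := by
      rw [hTn, Finset.mem_filter]
      refine ⟨?_, ht⟩
      have h1 : t ∈ Yg * K⁻¹ :=
        hty ▸ Finset.mul_mem_mul hy (Finset.inv_mem_inv hkK)
      rwa [hYg, mul_assoc] at h1
    exact Finset.mem_biUnion.mpr ⟨t, htmem, htk ▸ Finset.smul_mem_smul_finset hkK⟩
  have h1 : Y.card ≤ Tn.card * K.card := by
    calc Y.card = Yg.card := hYgcard.symm
    _ ≤ (Tn.biUnion (fun t => t • K)).card := Finset.card_le_card hcov
    _ ≤ ∑ t ∈ Tn, (t • K).card := Finset.card_biUnion_le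
    _ = Tn.card * K.card := by
        simp [Finset.card_smul_finset, Finset.sum_const, smul_eq_mul]
  -- Hamming distance lower bound
  have h2 : T₀.card ≤ hamDist (Y : Set G) c₁ c₂ := by
    have hsub : ↑(T₀.image (· * g₀)) ⊆ {x ∈ (Y : Set G) | c₁ x ≠ c₂ x} := by
      intro x hx
      simp only [Finset.coe_image, Set.mem_image, Finset.mem_coe] at hx
      obtain ⟨t, ht, rfl⟩ := hx
      rw [hT₀, Finset.mem_filter] at ht
      obtain ⟨htn, hty⟩ := ht
      rw [hTn, Finset.mem_filter] at htn
      exact ⟨hty, hdiff t htn.2⟩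
    have hfin : {x ∈ (Y : Set G) | c₁ x ≠ c₂ x}.Finite :=
      Y.finite_toSet.subset (Set.sep_subset _ _)
    calc T₀.card = (T₀.image (· * g₀)).card :=
          (Finset.card_image_of_injective _ (mul_left_injective g₀)).symm
    _ = (↑(T₀.image (· * g₀)) : Set G).ncard := (Set.ncard_coe_finset _).symm
    _ ≤ hamDist (Y : Set G) c₁ c₂ := Set.ncard_le_ncard hsub hfin
  -- error bound
  have h3 : Tn.card ≤ T₀.card + (((Y * F) \ Y).card + (Yg \ Y).card) := by
    have hT₀sub : T₀ ⊆ Tn := Finset.filter_subset _ _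
    have hsub2 : Tn \ T₀ ⊆ ((Y * F) \ Y) ∪ (Y \ Yg) := by
      intro t ht
      rw [Finset.mem_sdiff] at ht
      obtain ⟨htn, htn0⟩ := ht
      have h4 : t * g₀ ∉ Y := by
        intro h5
        exact htn0 (by rw [hT₀, Finset.mem_filter]; exact ⟨htn, h5⟩)
      have h6 : t ∉ Yg := by
        intro h7
        rw [hYg] at h7
        obtain ⟨y, hy, z, hz, rfl⟩ := Finset.mem_mul.mp h7
        rw [Finset.mem_singleton] at hz
        subst hz
        exact h4 (by simpa using hy)
      have h8 : t ∈ Y * F := (Finset.mem_filter.mp htn).1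
      by_cases h9 : t ∈ Y
      · exact Finset.mem_union_right _ (Finset.mem_sdiff.mpr ⟨h9, h6⟩)
      · exact Finset.mem_union_left _ (Finset.mem_sdiff.mpr ⟨h8, h9⟩)
    have h10 : (Tn \ T₀).card ≤ ((Y * F) \ Y).card + (Y \ Yg).card :=
      le_trans (Finset.card_le_card hsub2) (Finset.card_union_le _ _)
    have h11 : (Y \ Yg).card = (Yg \ Y).card :=
      Finset.card_sdiff_comm hYgcard.symm
    have h12 : (Tn \ T₀).card + T₀.card = Tn.card :=
      Finset.card_sdiff_add_card_eq_card hT₀sub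
    omega
  -- combine over ℝ
  have hK0 : (0 : ℝ) < K.card := by
    exact_mod_cast Finset.card_pos.mpr hKne
  have hr1 : (Y.card : ℝ) / K.card ≤ Tn.card := by
    rw [div_le_iff₀ hK0]
    exact_mod_cast h1
  have hr3 : (Tn.card : ℝ) ≤ T₀.card + (((Y * F) \ Y).card + ((Yg \ Y).card : ℝ)) := by
    exact_mod_cast h3
  have hr2 : (T₀.card : ℝ) ≤ (hamDist (Y : Set G) c₁ c₂ : ℝ) := by exact_mod_cast h2
  linarith

/-- A Besicovitch injective CA (w.r.t. an exhaustive sequence containing an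
amenable subsequence) is preinjective: it has no pair of mutually erasable patterns. -/
theorem besicovitch_injective_implies_preinjective {G Q : Type*} [Group G]
    [DecidableEq G] [Fintype Q] (hQ : 2 ≤ Fintype.card Q)
    (X : ℕ → Finset G) (hX : IsExhaustive X)
    (hsub : ∃ φ : ℕ → ℕ, StrictMono φ ∧ IsFolner (fun n => X (φ n)))
    (N : Finset G) (hN : N.Nonempty) (f : (N → Q) → Q)
    (hBinj : ∀ c₁ c₂ : G → Q, 0 < besDist X c₁ c₂ →
      0 < besDist X (caMap N f c₁) (caMap N f c₂)) :
    ¬∃ (E : Finset G) (p₁ p₂ : G → Q),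
      ¬Set.EqOn p₁ p₂ (E : Set G) ∧ MutuallyErasable N f E p₁ p₂ := by
  classical
  rintro ⟨E, p₁, p₂, hne, hME⟩
  obtain ⟨g₀, hg₀E, hg₀⟩ : ∃ g₀, g₀ ∈ (E : Set G) ∧ p₁ g₀ ≠ p₂ g₀ := by
    by_contra h
    push_neg at h
    exact hne fun x hx => h x hx
  have hg₀E' : g₀ ∈ E := Finset.mem_coe.mp hg₀E
  have hEne : E.Nonempty := ⟨g₀, hg₀E'⟩
  obtain ⟨T, hmax⟩ := exists_maximal_pdisj (G := G) E
  have hd : PDisj E T := hmax.1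
  set K : Finset G := E * E⁻¹ with hK
  have hKne : K.Nonempty :=
    ⟨g₀ * g₀⁻¹, Finset.mul_mem_mul hg₀E' (Finset.inv_mem_inv hg₀E')⟩
  have hcover : ∀ g, ∃ t ∈ T, g ∈ t • (K : Set G) := fun g =>
    maximal_pdisj_cover hmax hEne g
  set c₁ : G → Q := tileCfg E p₁ p₂ T ∅ with hc₁
  set c₂ : G → Q := tileCfg E p₁ p₂ T Set.univ with hc₂
  have himg : caMap N f c₁ = caMap N f c₂ := caMap_tile_univ hd hME
  have hdiff : ∀ t ∈ T, c₁ (t * g₀) ≠ c₂ (t * g₀) := by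
    intro t ht
    have hmem : t * g₀ ∈ t • (E : Set G) := Set.smul_mem_smul_set hg₀E
    rw [hc₁, hc₂, tileCfg_eq_of_mem hd ht hmem, tileCfg_eq_of_mem hd ht hmem]
    simpa [inv_mul_cancel_left] using hg₀
  obtain ⟨φ, hφ, hFol⟩ := hsub
  set u : ℕ → ℝ := fun n => (hamDist (X n : Set G) c₁ c₂ : ℝ) / (X n).card with hu
  have hbd : IsBoundedUnder (· ≤ ·) atTop u := by
    apply isBoundedUnder_of
    refine ⟨1, fun n => ?_⟩
    have hle : hamDist (X n : Set G) c₁ c₂ ≤ (X n).card := by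
      rw [hamDist, ← Set.ncard_coe_finset (X n)]
      exact Set.ncard_le_ncard (Set.sep_subset _ _) (X n).finite_toSet
    exact div_le_one_of_le₀ (by exact_mod_cast hle) (by positivity)
  set F : Finset G := {g₀⁻¹} * K⁻¹ with hF
  have ha : Tendsto (fun m => (((X (φ m) * F) \ X (φ m)).card : ℝ) / (X (φ m)).card)
      atTop (nhds 0) := by
    have := hFol.2 F⁻¹
    simpa only [inv_inv] using this
  have hb : Tendsto (fun m => (((X (φ m) * {g₀⁻¹}) \ X (φ m)).card : ℝ) / (X (φ m)).card)
      atTop (nhds 0) := by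
    have := hFol.2 {g₀}
    simpa only [Finset.inv_singleton] using this
  have hKpos : (0 : ℝ) < K.card := by exact_mod_cast Finset.card_pos.mpr hKne
  set δ : ℝ := 1 / (2 * K.card) with hδ
  have hδpos : 0 < δ := by positivity
  have hsumev : ∀ᶠ m in atTop,
      (((X (φ m) * F) \ X (φ m)).card : ℝ) / (X (φ m)).card
        + (((X (φ m) * {g₀⁻¹}) \ X (φ m)).card : ℝ) / (X (φ m)).card < δ := by
    have := ha.add hb
    rw [add_zero] at this
    exact this.eventually_lt_const hδpos
  obtain ⟨n₀, hn₀⟩ := hX.2 1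
  have hmono : Monotone X := monotone_nat_of_le_succ hX.1
  have hev : ∀ᶠ m in atTop, δ ≤ u (φ m) := by
    filter_upwards [hsumev, eventually_ge_atTop n₀] with m hsum hm
    have hYne : (X (φ m)).Nonempty := ⟨1, hmono (le_trans hm hφ.le_apply) hn₀⟩
    have hYpos : (0 : ℝ) < (X (φ m)).card := by
      exact_mod_cast Finset.card_pos.mpr hYne
    have hkey := density_bound K hKne T g₀ hcover c₁ c₂ hdiff (X (φ m))
    set Yc : ℝ := ((X (φ m)).card : ℝ)
    set a : ℝ := (((X (φ m) * F) \ X (φ m)).card : ℝ)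
    set b : ℝ := (((X (φ m) * {g₀⁻¹}) \ X (φ m)).card : ℝ)
    have hsum' : a + b < δ * Yc := by
      have : (a + b) / Yc < δ := by
        rw [add_div]; exact hsum
      calc a + b = ((a + b) / Yc) * Yc := by field_simp
      _ < δ * Yc := by
          exact mul_lt_mul_of_pos_right this hYpos
    have h2δ : Yc / K.card = 2 * δ * Yc := by
      rw [hδ]; field_simp
    have hfinal : δ * Yc ≤ (hamDist (X (φ m) : Set G) c₁ c₂ : ℝ) := by
      have := hkey
      rw [h2δ] at this
      linarith
    rw [hu]
    exact (le_div_iff₀ hYpos).mpr hfinal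
  have hfreq : ∃ᶠ n in atTop, δ ≤ u n :=
    hφ.tendsto_atTop.frequently hev.frequently
  have hbes : besDist X c₁ c₂ = limsup u atTop := rfl
  have hpos : 0 < besDist X c₁ c₂ := by
    rw [hbes]
    exact lt_of_lt_of_le hδpos (le_limsup_of_frequently_le hfreq hbd)
  have hpos2 := hBinj c₁ c₂ hpos
  rw [himg] at hpos2
  have hzero : besDist X (caMap N f c₂) (caMap N f c₂) = 0 := by
    have hham : ∀ n, hamDist (X n : Set G) (caMap N f c₂) (caMap N f c₂) = 0 := by
      intro n
      rw [hamDist]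
      simp
    unfold besDist
    simp only [hham, Nat.cast_zero, zero_div]
    exact limsup_const 0
  rw [hzero] at hpos2
  exact lt_irrefl 0 hpos2
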